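/- arXiv:1708.00564 — 2 statements merged into one kernel-verified Lean document; each statement's English description precedes it below -/
import Mathlib

section
/- Let p and q be primes with q ≡ 3 (mod 4), and let a be an integer with a² ≡ -p (mod q). Then the symmetric 3×3 rational matrix T₁ = [[(a²q + a² + p)/q, -a, -a(q+1)/2], [-a, 1, q/2], [-a(q+1)/2, q/2, q(q+1)/4]] is positive definite and has determinant det(T₁) = p/4, so that 4·det(T₁) = p. Moreover its diagonal entries are integers (q divides a²q + a² + p, and 4 divides q(q+1)) and twice each off-diagonal entry is an integer. -/
open Matrix

set_option maxHeartbeats 1000000 in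


/-- (Schulze-Pillot)  Let `p`, `q` be primes with `q ≡ 3 (mod 4)` and let `a` be an
integer with `a² ≡ -p (mod q)`.  Then the symmetric rational matrix
`T₁ = [[(a²q + a² + p)/q, -a, -a(q+1)/2], [-a, 1, q/2], [-a(q+1)/2, q/2, q(q+1)/4]]`
is positive definite with determinant `p/4` (so `4 · det T₁ = p`); its diagonal
entries are integers (indeed `q ∣ a²q + a² + p` and `4 ∣ q(q+1)`) and twice each
off-diagonal entry is an integer. -/
theorem ternary_matrix_schulze_pillot
    (p q : ℕ) (hp : p.Prime) (hq : q.Prime) (hq4 : q % 4 = 3)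
    (a : ℤ) (ha : (q : ℤ) ∣ a ^ 2 + (p : ℤ)) :
    let T : Matrix (Fin 3) (Fin 3) ℚ :=
      !![((a : ℚ) ^ 2 * q + (a : ℚ) ^ 2 + p) / q, -(a : ℚ), -(a : ℚ) * (q + 1) / 2;
         -(a : ℚ), 1, (q : ℚ) / 2;
         -(a : ℚ) * (q + 1) / 2, (q : ℚ) / 2, (q : ℚ) * (q + 1) / 4]
    T.IsSymm ∧ (∀ x : Fin 3 → ℚ, x ≠ 0 → 0 < x ⬝ᵥ T.mulVec x) ∧
      T.det = (p : ℚ) / 4 ∧ 4 * T.det = (p : ℚ) ∧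
      ((q : ℤ) ∣ a ^ 2 * q + a ^ 2 + (p : ℤ)) ∧ ((4 : ℤ) ∣ (q : ℤ) * (q + 1)) ∧
      (∀ i, ∃ z : ℤ, T i i = (z : ℚ)) ∧
      (∀ i j, ∃ z : ℤ, 2 * T i j = (z : ℚ)) := by
  intro T
  obtain ⟨k, hk⟩ := ha
  have hq0 : (q : ℚ) ≠ 0 := Nat.cast_ne_zero.mpr hq.ne_zero
  have hqpos : (0 : ℚ) < q := by exact_mod_cast hq.pos
  have hppos : (0 : ℚ) < p := by exact_mod_cast hp.pos
  have hkQ : (a : ℚ) ^ 2 + p = q * k := by exact_mod_cast hk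
  have hqZ3 : (q : ℤ) % 4 = 3 := by omega
  have h4q1 : (4 : ℤ) ∣ (q : ℤ) + 1 := by omega
  obtain ⟨m, hm⟩ := h4q1
  have hmQ : ((q : ℚ) + 1) = 4 * m := by exact_mod_cast hm
  have hdet : T.det = (p : ℚ) / 4 := by
    simp only [T, Matrix.det_fin_three, Matrix.of_apply, Matrix.cons_val', Matrix.cons_val_zero,
      Matrix.cons_val_one, Matrix.head_cons, Matrix.empty_val', Matrix.cons_val_fin_one,
      Matrix.head_fin_const, Matrix.cons_val_two, Matrix.tail_cons]
    field_simp
    ring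
  refine ⟨?_, ?_, hdet, by rw [hdet]; ring, ?_, ?_, ?_, ?_⟩
  · ext i j
    fin_cases i <;> fin_cases j <;> simp [T, Matrix.transpose_apply]
  · intro x hx
    have key : (q : ℚ) * (4 * (x ⬝ᵥ T.mulVec x)) =
        4 * q * (x 1 - a * x 0 + q * x 2 / 2) ^ 2 +
          (q * x 2 - 2 * a * x 0) ^ 2 + 4 * p * (x 0) ^ 2 := by
      simp only [T, Matrix.mulVec, dotProduct, Matrix.of_apply, Fin.sum_univ_three,
        Matrix.cons_val', Matrix.cons_val_zero, Matrix.cons_val_one, Matrix.head_cons,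
        Matrix.empty_val', Matrix.cons_val_fin_one, Matrix.head_fin_const,
        Matrix.cons_val_two, Matrix.tail_cons]
      field_simp
      ring
    have hqQ : 0 < (q : ℚ) * (4 * (x ⬝ᵥ T.mulVec x)) := by
      rw [key]
      by_cases h0 : x 0 = 0
      · by_cases h2 : x 2 = 0
        · have h1 : x 1 ≠ 0 := by
            intro h1
            apply hx
            funext i; fin_cases i <;> assumption
          have h1' : 0 < (x 1) ^ 2 := by positivity
          rw [h0, h2]
          nlinarith []
        · have h2' : 0 < (q * x 2 - 2 * a * x 0) ^ 2 := by
            have : q * x 2 - 2 * a * x 0 ≠ 0 := by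
              rw [h0]; simpa [hq0] using h2
            positivity
          nlinarith [sq_nonneg (x 1 - a * x 0 + q * x 2 / 2), sq_nonneg (x 0)]
      · have h0' : 0 < (x 0) ^ 2 := by positivity
        nlinarith [sq_nonneg (x 1 - a * x 0 + q * x 2 / 2),
          sq_nonneg (q * x 2 - 2 * a * x 0)]
    rcases mul_pos_iff.mp hqQ with ⟨_, h⟩ | ⟨h', _⟩
    · linarith
    · linarith
  · exact ⟨a ^ 2 + k, by linear_combination hk⟩
  · exact ⟨(q : ℤ) * m, by rw [hm]; ring⟩
  · intro i
    fin_cases i <;>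
      simp [T]
    · exact ⟨a ^ 2 + k, by push_cast; field_simp; linear_combination hkQ⟩
    · exact ⟨1, by norm_num⟩
    · exact ⟨(q : ℤ) * m, by push_cast; rw [hmQ]; ring⟩
  · intro i j
    fin_cases i <;> fin_cases j <;>
      simp [T]
    · exact ⟨2 * (a ^ 2 + k), by push_cast; field_simp; linear_combination hkQ⟩
    · exact ⟨-2 * a, by push_cast; ring⟩
    · exact ⟨-a * ((q : ℤ) + 1), by push_cast; ring⟩
    · exact ⟨-2 * a, by push_cast; ring⟩
    · exact ⟨2, by norm_num⟩
    · exact ⟨q, by push_cast; ring⟩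
    · exact ⟨-a * ((q : ℤ) + 1), by push_cast; ring⟩
    · exact ⟨q, by push_cast; ring⟩
    · exact ⟨2 * (q : ℤ) * m, by push_cast; rw [hmQ]; ring⟩
end

section
/- For every prime p there exists a symmetric positive definite 3×3 rational matrix T such that every diagonal entry of T is an integer, every entry of 2T is an integer, and det(T) = p/4 (equivalently, D(T) := 2²·det(T) = p). -/
open Matrix

/-- For every prime `p` there are `q ≡ 3 (mod 4)` and `s` with `q ∣ s² + p`. -/
lemma exists_aux_qs (p : ℕ) (hp : p.Prime) :
    ∃ q s : ℕ, q % 4 = 3 ∧ q ∣ s ^ 2 + p := by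
  rcases eq_or_ne p 2 with rfl | hp2
  · exact ⟨3, 1, by norm_num, by norm_num⟩
  have hodd : p % 2 = 1 := Nat.odd_iff.mp (hp.odd_of_ne_two hp2)
  have h4 : p % 4 = 1 ∨ p % 4 = 3 := by omega
  rcases h4 with h1 | h3
  · -- the hard case: use Dirichlet + quadratic reciprocity
    haveI : Fact p.Prime := ⟨hp⟩
    have hchar : ringChar (ZMod p) ≠ 2 := by
      rw [ZMod.ringChar_zmod_n]; exact hp2
    obtain ⟨u, hu⟩ := FiniteField.exists_nonsquare (F := ZMod p) hchar
    have hu0 : u ≠ 0 := fun h => hu (h ▸ ⟨0, by simp⟩)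
    have hcop : Nat.Coprime 4 p := by
      have : Nat.Coprime 2 p := (Nat.coprime_primes (by norm_num) hp).mpr
        (fun h => hp2 h.symm)
      simpa using Nat.Coprime.pow_left 2 this
    obtain ⟨r, hr4, hrp⟩ := Nat.chineseRemainder hcop 3 u.val
    have hr4' : (r : ℕ) % 4 = 3 := hr4
    haveI : NeZero (4 * p) := ⟨by have := hp.pos; omega⟩
    have hrunit : IsUnit ((r : ℕ) : ZMod (4 * p)) := by
      rw [ZMod.isUnit_iff_coprime]
      refine Nat.Coprime.mul_right ?_ ?_
      · rw [Nat.Coprime, Nat.gcd_comm, Nat.gcd_rec, hr4']; rfl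
      · refine Nat.coprime_comm.mp ((hp.coprime_iff_not_dvd).mpr fun hdvd => ?_)
        have heq : (r : ℕ) % p = u.val % p := hrp
        have hv : u.val < p := ZMod.val_lt u
        have hr0 : (r : ℕ) % p = 0 := by obtain ⟨t, ht⟩ := hdvd; simp [ht, Nat.mul_mod_right]
        have hv' : u.val % p = u.val := Nat.mod_eq_of_lt hv
        have : u.val = 0 := by omega
        exact hu0 (by rwa [ZMod.val_eq_zero] at this)
    obtain ⟨Q, -, hQp, hQmod⟩ := Nat.forall_exists_prime_gt_and_eq_mod hrunit 0
    haveI : Fact Q.Prime := ⟨hQp⟩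
    have hQr : Q ≡ r [MOD 4 * p] := (ZMod.natCast_eq_natCast_iff _ _ _).mp hQmod
    have hQ4 : Q % 4 = 3 := by
      have h := (hQr.of_dvd ⟨p, rfl⟩ : Q ≡ r [MOD 4])
      have := h.trans hr4
      simpa [Nat.ModEq] using this
    have hQmodp : Q ≡ u.val [MOD p] :=
      (hQr.of_dvd ⟨4, mul_comm 4 p⟩).trans hrp
    have hQu : (Q : ZMod p) = u := by
      have := (ZMod.natCast_eq_natCast_iff _ _ _).mpr hQmodp
      rwa [ZMod.natCast_zmod_val] at this
    have hQ2 : Q ≠ 2 := by omega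
    have hnsq : ¬ IsSquare ((p : ZMod Q)) := by
      rw [← ZMod.exists_sq_eq_prime_iff_of_mod_four_eq_one h1 hQ2, hQu]
      exact hu
    have hQne : Q ≠ p := fun h => by omega
    have hp0 : ((p : ZMod Q)) ≠ 0 := by
      rw [Ne, ZMod.natCast_eq_zero_iff]
      rw [Nat.prime_dvd_prime_iff_eq hQp hp]
      exact hQne
    have hcharQ : ringChar (ZMod Q) ≠ 2 := by
      rw [ZMod.ringChar_zmod_n]; exact hQ2
    have hχp : quadraticChar (ZMod Q) (p : ZMod Q) = -1 :=
      (quadraticChar_neg_one_iff_not_isSquare).mpr hnsq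
    have hχm1 : quadraticChar (ZMod Q) (-1) = -1 := by
      rw [quadraticChar_neg_one hcharQ, ZMod.card]
      exact ZMod.χ₄_nat_three_mod_four hQ4
    have hsq : IsSquare (-(p : ZMod Q)) := by
      have h1' : quadraticChar (ZMod Q) (-(p : ZMod Q)) = 1 := by
        rw [show (-(p : ZMod Q)) = (-1) * p by ring, _root_.map_mul, hχm1, hχp]
        norm_num
      exact (quadraticChar_one_iff_isSquare (neg_ne_zero.mpr hp0)).mp h1'
    obtain ⟨y, hy⟩ := hsq
    refine ⟨Q, y.val, hQ4, ?_⟩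
    rw [← ZMod.natCast_eq_zero_iff]
    push_cast
    rw [ZMod.natCast_zmod_val, sq, ← hy]
    ring
  · exact ⟨p, 0, h3, by simpa using Dvd.intro 1 rfl⟩

/-- For every prime `p` there exists a symmetric positive definite `3 × 3`
rational matrix `T` with integral diagonal entries, `2T` integral, and
`det T = p/4` (equivalently `D(T) = 4 · det T = p`). -/
theorem exists_ternary_half_integral_with_D_eq_p
    (p : ℕ) (hp : p.Prime) :
    ∃ T : Matrix (Fin 3) (Fin 3) ℚ,
      T.IsSymm ∧
      (∀ i, ∃ z : ℤ, T i i = (z : ℚ)) ∧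
      (∀ i j, ∃ z : ℤ, 2 * T i j = (z : ℚ)) ∧
      (∀ x : Fin 3 → ℚ, x ≠ 0 → 0 < x ⬝ᵥ T.mulVec x) ∧
      T.det = (p : ℚ) / 4 := by
  obtain ⟨q, s, hq4, hdvd⟩ := exists_aux_qs p hp
  obtain ⟨m, hm⟩ := hdvd
  -- q = 4k + 3
  obtain ⟨k, hk⟩ : ∃ k, q = 4 * k + 3 := ⟨q / 4, by omega⟩
  subst hk
  set T : Matrix (Fin 3) (Fin 3) ℚ :=
    !![1, 1/2, 1; 1/2, (k : ℚ) + 1, ((s : ℚ) + 1)/2; 1, ((s : ℚ) + 1)/2, (m : ℚ) + 1] with hT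
  have hmr : ((s : ℚ) ^ 2 + (p : ℚ)) = (4 * (k : ℚ) + 3) * (m : ℚ) := by
    exact_mod_cast congrArg (fun n : ℕ => (n : ℚ)) hm
  refine ⟨T, ?_, ?_, ?_, ?_, ?_⟩
  · ext i j
    fin_cases i <;> fin_cases j <;> simp [hT, Matrix.transpose_apply]
  · intro i
    fin_cases i
    · exact ⟨1, by norm_num [hT]⟩
    · exact ⟨(k : ℤ) + 1, by push_cast [hT]; norm_num⟩
    · exact ⟨(m : ℤ) + 1, by push_cast [hT]; norm_num [Matrix.cons_val_two]⟩
  · intro i j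
    fin_cases i <;> fin_cases j
    · exact ⟨2, by norm_num [hT]⟩
    · exact ⟨1, by norm_num [hT]⟩
    · exact ⟨2, by norm_num [hT]⟩
    · exact ⟨1, by norm_num [hT]⟩
    · exact ⟨2 * ((k : ℤ) + 1), by push_cast [hT]; norm_num⟩
    · exact ⟨(s : ℤ) + 1, by simp [hT]; push_cast; ring⟩
    · exact ⟨2, by norm_num [hT]⟩
    · exact ⟨(s : ℤ) + 1, by simp [hT]; push_cast; ring⟩
    · exact ⟨2 * ((m : ℤ) + 1), by push_cast [hT]; norm_num [Matrix.cons_val_two]⟩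
  · intro x hx
    have hq0 : (0 : ℚ) < 4 * (k : ℚ) + 3 := by positivity
    have hp0 : (0 : ℚ) < (p : ℚ) := by exact_mod_cast hp.pos
    have hmval : (m : ℚ) = ((s : ℚ) ^ 2 + (p : ℚ)) / (4 * (k : ℚ) + 3) := by
      field_simp [hmr]
      linarith [hmr]
    have key : x ⬝ᵥ T.mulVec x =
        (x 0 + x 1 / 2 + x 2) ^ 2
        + ((4 * (k : ℚ) + 3) / 4) * (x 1 + (2 * (s : ℚ) / (4 * (k : ℚ) + 3)) * x 2) ^ 2
        + ((p : ℚ) / (4 * (k : ℚ) + 3)) * (x 2) ^ 2 := by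
      simp only [hT, Matrix.mulVec, dotProduct, Fin.sum_univ_three,
        Matrix.cons_val', Matrix.cons_val_zero, Matrix.cons_val_one, Matrix.head_cons,
        Matrix.empty_val', Matrix.cons_val_fin_one, Matrix.head_fin_const, Matrix.of_apply, Matrix.cons_val_two, Matrix.tail_cons]
      rw [hmval]
      field_simp
      ring
    rw [key]
    rcases ne_or_eq (x 2) 0 with h2 | h2
    · have t3 : 0 < ((p : ℚ) / (4 * (k : ℚ) + 3)) * (x 2) ^ 2 := by positivity
      have t1 : 0 ≤ (x 0 + x 1 / 2 + x 2) ^ 2 := sq_nonneg _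
      have t2 : 0 ≤ ((4 * (k : ℚ) + 3) / 4) *
          (x 1 + (2 * (s : ℚ) / (4 * (k : ℚ) + 3)) * x 2) ^ 2 := by positivity
      linarith
    · rcases ne_or_eq (x 1) 0 with h1 | h1
      · have t2 : 0 < ((4 * (k : ℚ) + 3) / 4) *
            (x 1 + (2 * (s : ℚ) / (4 * (k : ℚ) + 3)) * x 2) ^ 2 := by
          rw [h2]
          have : x 1 + (2 * (s : ℚ) / (4 * (k : ℚ) + 3)) * 0 = x 1 := by ring
          rw [this]
          positivity
        have t1 : 0 ≤ (x 0 + x 1 / 2 + x 2) ^ 2 := sq_nonneg _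
        have t3 : 0 ≤ ((p : ℚ) / (4 * (k : ℚ) + 3)) * (x 2) ^ 2 := by positivity
        linarith
      · have h0 : x 0 ≠ 0 := by
          intro h0
          apply hx
          funext i
          fin_cases i <;> assumption
        have t1 : 0 < (x 0 + x 1 / 2 + x 2) ^ 2 := by
          rw [h1, h2]
          have : x 0 + 0 / 2 + 0 = x 0 := by ring
          rw [this]
          positivity
        have t2 : 0 ≤ ((4 * (k : ℚ) + 3) / 4) *
            (x 1 + (2 * (s : ℚ) / (4 * (k : ℚ) + 3)) * x 2) ^ 2 := by positivity
        have t3 : 0 ≤ ((p : ℚ) / (4 * (k : ℚ) + 3)) * (x 2) ^ 2 := by positivity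
        linarith
  · rw [hT, Matrix.det_fin_three]
    norm_num [Matrix.cons_val_two]
    linear_combination -hmr / 4
end
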